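/- A ξ-maximum Bayesian privacy preserving mapping is (2ξ)-differentially private: if e^{−ξ} ≤ f(d|w)/f_B(d) ≤ e^{ξ} for all parameters w and all data d, then for any two parameters w, w' and any d, e^{−2ξ} ≤ f(d|w)/f(d|w') ≤ e^{2ξ}. -/
import Mathlib


/-- A ξ-maximum Bayesian privacy preserving mapping is (2ξ)-differentially private:
if `e^{−ξ} ≤ f(d|w)/f_B(d) ≤ e^{ξ}` for all parameters `w` and all data `d`, then for any
two parameters `w, w'` and any `d`, `e^{−2ξ} ≤ f(d|w)/f(d|w') ≤ e^{2ξ}`. -/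
theorem bayesian_privacy_implies_differential_privacy
    {D W : Type*} (f : D → W → ℝ) (fB : D → ℝ)
    (hf_pos : ∀ d w, 0 < f d w) (hfB_pos : ∀ d, 0 < fB d)
    (ξ : ℝ) (hξ : 0 ≤ ξ)
    (hBP : ∀ d w, Real.exp (-ξ) ≤ f d w / fB d ∧ f d w / fB d ≤ Real.exp ξ) :
    ∀ d (w w' : W),
      Real.exp (-(2 * ξ)) ≤ f d w / f d w' ∧ f d w / f d w' ≤ Real.exp (2 * ξ) := by
  intro d w w'
  obtain ⟨h1, h2⟩ := hBP d w
  obtain ⟨h3, h4⟩ := hBP d w'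
  have hB := hfB_pos d
  have hw' := hf_pos d w'
  have key : f d w / f d w' = (f d w / fB d) / (f d w' / fB d) := by
    field_simp
  constructor
  · rw [key, show -(2*ξ) = -ξ - ξ by ring, Real.exp_sub]
    apply div_le_div₀ (div_pos (hf_pos d w) hB).le h1 (div_pos hw' hB) h4
  · rw [key, show (2*ξ) = ξ - (-ξ) by ring, Real.exp_sub]
    apply div_le_div₀ (Real.exp_pos ξ).le h2 (Real.exp_pos _) h3
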